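/- Let X be a set and σ: X → X a map with proper forward orbits, meaning that for every x ∈ X and every finite subset F ⊆ X, the set {n ∈ ℕ : σ^n(x) ∈ F} is finite. Let a: X → ℕ be finitely supported. Then for every n ≥ ‖a‖₁ · ‖t(a)‖₁, the function s_n(a) takes values in {0,1}. -/

import Mathlib

/-- ℓ¹-norm of an ℕ-valued 0-chain: `‖a‖₁ = Σ_x a x`. -/
noncomputable def l1Norm {X : Type*} (a : X →₀ ℕ) : ℕ := a.sum fun _ n => n

/-- ℓ¹-distance `‖a - b‖₁ = Σ_x |a x - b x|` (with `|a x - b x|` computed via truncated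
subtraction on ℕ as `(a x - b x) + (b x - a x)`). -/
noncomputable def l1Dist {X : Type*} (a b : X →₀ ℕ) : ℕ := l1Norm ((a - b) + (b - a))

/-- `a ∧ b`: the pointwise minimum of two ℕ-valued 0-chains. -/
noncomputable def chainMin {X : Type*} (a b : X →₀ ℕ) : X →₀ ℕ :=
  Finsupp.zipWith min (min_self 0) a b

/-- `b(a)`: the characteristic function of the support of `a`. -/
noncomputable def bChain {X : Type*} (a : X →₀ ℕ) : X →₀ ℕ :=
  Finsupp.onFinset a.support (fun x => if a x = 0 then 0 else 1)
    (fun x h => Finsupp.mem_support_iff.mpr (by intro hx; simp [hx] at h))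

/-- `t(a) := a - b(a)`. -/
noncomputable def tChain {X : Type*} (a : X →₀ ℕ) : X →₀ ℕ := a - bChain a

/-- The flow map `s₁`: `s₁(a)(x) = b(a)(x) + Σ_{y : σ y = x} t(a)(y)`. -/
noncomputable def flowStep {X : Type*} (σ : X → X) (a : X →₀ ℕ) : X →₀ ℕ :=
  bChain a + (tChain a).sum fun y n => Finsupp.single (σ y) n

section Aux
open scoped Classical
variable {X : Type*}

lemma bChain_apply (a : X →₀ ℕ) (x : X) : bChain a x = if a x = 0 then 0 else 1 := rfl

lemma bChain_le (a : X →₀ ℕ) (x : X) : bChain a x ≤ a x := by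
  rw [bChain_apply]; split <;> omega

lemma tChain_apply (a : X →₀ ℕ) (x : X) : tChain a x = a x - bChain a x :=
  Finsupp.tsub_apply a _ x

lemma b_add_t (a : X →₀ ℕ) : bChain a + tChain a = a := by
  ext x
  have := bChain_le a x
  rw [Finsupp.add_apply, tChain_apply]
  omega

lemma support_bChain (a : X →₀ ℕ) : (bChain a).support = a.support := by
  ext x; simp [Finsupp.mem_support_iff, bChain_apply]

lemma l1Norm_add (f g : X →₀ ℕ) : l1Norm (f + g) = l1Norm f + l1Norm g :=
  Finsupp.sum_add_index' (fun _ => rfl) (fun _ _ _ => rfl)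

lemma l1Norm_eq_sum (f : X →₀ ℕ) : l1Norm f = ∑ x ∈ f.support, f x := rfl

lemma apply_le_l1Norm (f : X →₀ ℕ) (x : X) : f x ≤ l1Norm f := by
  by_cases h : x ∈ f.support
  · exact Finset.single_le_sum (fun _ _ => Nat.zero_le _) h
  · simp [Finsupp.notMem_support_iff.mp h]

lemma l1Norm_eq_zero {f : X →₀ ℕ} (h : l1Norm f = 0) : f = 0 := by
  ext x
  have := apply_le_l1Norm f x
  simp only [Finsupp.coe_zero, Pi.zero_apply]
  omega

lemma l1Norm_push (σ : X → X) (f : X →₀ ℕ) :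
    l1Norm (f.sum fun y n => Finsupp.single (σ y) n) = l1Norm f := by
  classical
  induction f using Finsupp.induction with
  | zero => simp [l1Norm]
  | single_add x n f hx hn ih =>
      rw [Finsupp.sum_add_index' (by simp) (fun y m₁ m₂ => Finsupp.single_add (σ y) m₁ m₂),
        l1Norm_add, l1Norm_add, ih]
      congr 1
      rw [Finsupp.sum_single_index (by simp)]
      simp [l1Norm, Finsupp.sum_single_index]

lemma l1Norm_bChain (a : X →₀ ℕ) : l1Norm (bChain a) = a.support.card := by
  rw [l1Norm_eq_sum, support_bChain]
  rw [Finset.card_eq_sum_ones]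
  refine Finset.sum_congr rfl fun x hx => ?_
  rw [Finsupp.mem_support_iff] at hx
  simp [bChain_apply, hx]

lemma card_add_m (a : X →₀ ℕ) : a.support.card + l1Norm (tChain a) = l1Norm a := by
  conv_rhs => rw [← b_add_t a]
  rw [l1Norm_add, l1Norm_bChain]

lemma flowStep_apply (σ : X → X) (a : X →₀ ℕ) (x : X) :
    flowStep σ a x = bChain a x +
      ∑ y ∈ (tChain a).support, if σ y = x then tChain a y else 0 := by
  classical
  rw [flowStep, Finsupp.add_apply, Finsupp.sum_apply]
  congr 1
  refine Finset.sum_congr rfl fun y _ => ?_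
  simp [Finsupp.single_apply]

lemma bChain_le_flowStep (σ : X → X) (a : X →₀ ℕ) (x : X) :
    bChain a x ≤ flowStep σ a x := by
  rw [flowStep_apply]
  exact Nat.le_add_right _ _

lemma flowStep_ge (σ : X → X) (a : X →₀ ℕ) (y : X) :
    bChain a (σ y) + tChain a y ≤ flowStep σ a (σ y) := by
  classical
  rw [flowStep_apply]
  by_cases h : tChain a y = 0
  · simp [h]
  · refine Nat.add_le_add_left ?_ _
    have hy : y ∈ (tChain a).support := Finsupp.mem_support_iff.mpr h
    calc tChain a y = if σ y = σ y then tChain a y else 0 := by simp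
    _ ≤ _ := Finset.single_le_sum (f := fun z => if σ z = σ y then tChain a z else 0)
        (fun _ _ => by positivity) hy

lemma support_subset_flowStep (σ : X → X) (a : X →₀ ℕ) :
    a.support ⊆ (flowStep σ a).support := by
  intro x hx
  rw [Finsupp.mem_support_iff] at hx ⊢
  have h1 : bChain a x = 1 := by simp [bChain_apply, hx]
  have := bChain_le_flowStep σ a x
  omega

lemma l1Norm_flowStep (σ : X → X) (a : X →₀ ℕ) :
    l1Norm (flowStep σ a) = l1Norm a := by
  rw [flowStep, l1Norm_add, l1Norm_push]
  conv_rhs => rw [← b_add_t a, l1Norm_add]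

end Aux

section Main
open scoped Classical
variable {X : Type*}

lemma tmass_mem_support {a : X →₀ ℕ} {x : X} (h : 1 ≤ tChain a x) : x ∈ a.support := by
  rw [tChain_apply] at h
  rw [Finsupp.mem_support_iff]
  omega

lemma m_mono (σ : X → X) (a : X →₀ ℕ) :
    l1Norm (tChain (flowStep σ a)) ≤ l1Norm (tChain a) := by
  have h1 := card_add_m a
  have h2 := card_add_m (flowStep σ a)
  have h3 : a.support.card ≤ (flowStep σ a).support.card :=
    Finset.card_le_card (support_subset_flowStep σ a)
  have h4 := l1Norm_flowStep σ a
  omega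

lemma propagate {σ : X → X} {a : X →₀ ℕ} {y : X}
    (hsupp : (flowStep σ a).support = a.support)
    (ht : 1 ≤ tChain a y) : 1 ≤ tChain (flowStep σ a) (σ y) := by
  have h1 := flowStep_ge σ a y
  have h2 : σ y ∈ (flowStep σ a).support := by
    rw [Finsupp.mem_support_iff]; omega
  have h3 : σ y ∈ a.support := hsupp ▸ h2
  rw [Finsupp.mem_support_iff] at h3
  have hb : bChain a (σ y) = 1 := by simp [bChain_apply, h3]
  have hbf : bChain (flowStep σ a) (σ y) ≤ 1 := by
    rw [bChain_apply]; split <;> omega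
  rw [tChain_apply]
  omega

lemma l1Norm_iter (σ : X → X) (a : X →₀ ℕ) (k : ℕ) :
    l1Norm ((flowStep σ)^[k] a) = l1Norm a := by
  induction k with
  | zero => rfl
  | succ k ih => rw [Function.iterate_succ_apply', l1Norm_flowStep, ih]

lemma m_anti (σ : X → X) (a : X →₀ ℕ) {k l : ℕ} (h : k ≤ l) :
    l1Norm (tChain ((flowStep σ)^[l] a)) ≤ l1Norm (tChain ((flowStep σ)^[k] a)) := by
  induction l, h using Nat.le_induction with
  | base => exact le_refl _
  | succ l hl ih =>
      rw [Function.iterate_succ_apply']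
      exact (m_mono σ _).trans ih

lemma supp_iter_mono (σ : X → X) (a : X →₀ ℕ) (k : ℕ) :
    a.support ⊆ ((flowStep σ)^[k] a).support := by
  induction k with
  | zero => exact subset_rfl
  | succ k ih =>
      rw [Function.iterate_succ_apply']
      exact ih.trans (support_subset_flowStep σ _)

lemma decrement (σ : X → X)
    (hproper : ∀ (x : X) (F : Finset X), {n : ℕ | σ^[n] x ∈ F}.Finite)
    (a : X →₀ ℕ) (hm : 0 < l1Norm (tChain a)) :
    l1Norm (tChain ((flowStep σ)^[l1Norm a] a)) < l1Norm (tChain a) := by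
  set N := l1Norm a with hN
  by_contra hcon
  push_neg at hcon
  have hm_eq : ∀ i ≤ N, l1Norm (tChain ((flowStep σ)^[i] a)) = l1Norm (tChain a) := by
    intro i hi
    have h1 := m_anti σ a (Nat.zero_le i)
    have h2 := m_anti σ a hi
    simp only [Function.iterate_zero_apply] at h1
    omega
  have hsupp_eq : ∀ i ≤ N, ((flowStep σ)^[i] a).support = a.support := by
    intro i hi
    refine (Finset.eq_of_subset_of_card_le (supp_iter_mono σ a i) ?_).symm
    have c1 := card_add_m ((flowStep σ)^[i] a)
    have c2 := card_add_m a
    rw [l1Norm_iter, hm_eq i hi] at c1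
    omega
  obtain ⟨y, hy⟩ : ∃ y, 1 ≤ tChain a y := by
    by_contra h
    push_neg at h
    have h0 : tChain a = 0 := by
      ext x
      have := h x
      simp only [Finsupp.coe_zero, Pi.zero_apply]
      omega
    rw [h0] at hm
    simp [l1Norm] at hm
  have hprop : ∀ i ≤ N, 1 ≤ tChain ((flowStep σ)^[i] a) (σ^[i] y) := by
    intro i
    induction i with
    | zero => intro _; simpa using hy
    | succ i ih =>
        intro hi
        rw [Function.iterate_succ_apply', Function.iterate_succ_apply']
        apply propagate
        · rw [← Function.iterate_succ_apply' (flowStep σ) i a, hsupp_eq (i+1) hi,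
            hsupp_eq i (by omega)]
        · exact ih (by omega)
  have hmaps : ∀ i ∈ Finset.range (N + 1), σ^[i] y ∈ a.support := by
    intro i hi
    rw [Finset.mem_range] at hi
    have := tmass_mem_support (hprop i (by omega))
    rwa [hsupp_eq i (by omega)] at this
  have hcard : a.support.card < (Finset.range (N + 1)).card := by
    rw [Finset.card_range]
    have := card_add_m a
    omega
  obtain ⟨i, hi, j, hj, hij, heq⟩ :=
    Finset.exists_ne_map_eq_of_card_lt_of_maps_to hcard hmaps
  wlog hlt : i < j generalizing i j
  · exact this j hj i hi hij.symm heq.symm (by omega)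
  set p := j - i with hp
  have hp0 : 0 < p := by omega
  have hper : ∀ k : ℕ, σ^[i + k * p] y = σ^[i] y := by
    intro k
    induction k with
    | zero => simp
    | succ k ih =>
        have h1 : i + (k + 1) * p = p + (i + k * p) := by ring
        rw [h1, Function.iterate_add_apply, ih, ← Function.iterate_add_apply]
        have h2 : p + i = j := by omega
        rw [h2, ← heq]
  have hinf : {n : ℕ | σ^[n] y ∈ ({σ^[i] y} : Finset X)}.Infinite := by
    apply Set.infinite_of_injective_forall_mem (f := fun k : ℕ => i + k * p)
    · intro k1 k2 h
      simp only at h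
      exact Nat.eq_of_mul_eq_mul_right hp0 (by omega)
    · intro k
      simp [hper k]
  exact hinf (hproper y {σ^[i] y})

theorem flowIter_eventually_binary' {X' : Type*} (σ : X' → X')
    (hproper : ∀ (x : X') (F : Finset X'), {n : ℕ | σ^[n] x ∈ F}.Finite)
    (a : X' →₀ ℕ) :
    ∀ n : ℕ, l1Norm a * l1Norm (tChain a) ≤ n →
      ∀ x : X', ((flowStep σ)^[n] a) x = 0 ∨ ((flowStep σ)^[n] a) x = 1 := by
  intro n hn x
  have key : ∀ j : ℕ,
      l1Norm (tChain ((flowStep σ)^[l1Norm a * j] a)) ≤ l1Norm (tChain a) - j := by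
    intro j
    induction j with
    | zero => simp
    | succ j ih =>
        by_cases h0 : l1Norm (tChain ((flowStep σ)^[l1Norm a * j] a)) = 0
        · have := m_anti σ a (Nat.mul_le_mul_left (l1Norm a) (Nat.le_add_right j 1))
          omega
        · have hdec := decrement σ hproper ((flowStep σ)^[l1Norm a * j] a) (by omega)
          rw [l1Norm_iter] at hdec
          have harith : l1Norm a * (j + 1) = l1Norm a + l1Norm a * j := by ring
          rw [harith, Function.iterate_add_apply]
          omega
  have hzero : l1Norm (tChain ((flowStep σ)^[l1Norm a * l1Norm (tChain a)] a)) = 0 := by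
    have := key (l1Norm (tChain a))
    omega
  have hfin : l1Norm (tChain ((flowStep σ)^[n] a)) = 0 := by
    have := m_anti σ a hn
    omega
  have ht0 : tChain ((flowStep σ)^[n] a) = 0 := l1Norm_eq_zero hfin
  have := congrFun (congrArg (DFunLike.coe) ht0) x
  simp only [Finsupp.coe_zero, Pi.zero_apply] at this
  rw [tChain_apply] at this
  have hb : bChain ((flowStep σ)^[n] a) x ≤ 1 := by
    rw [bChain_apply]; split <;> omega
  omega
end Main

/-- If `σ` has proper forward orbits, then for every `n ≥ ‖a‖₁ ⬝ ‖t(a)‖₁` the 0-chain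
`s_n(a)` takes values in `{0,1}`. -/
theorem flowIter_eventually_binary {X : Type*} (σ : X → X)
    (hproper : ∀ (x : X) (F : Finset X), {n : ℕ | σ^[n] x ∈ F}.Finite)
    (a : X →₀ ℕ) :
    ∀ n : ℕ, l1Norm a * l1Norm (tChain a) ≤ n →
      ∀ x : X, ((flowStep σ)^[n] a) x = 0 ∨ ((flowStep σ)^[n] a) x = 1 := by
  exact flowIter_eventually_binary' σ hproper a
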